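/- Fix an anchor point (b_a, y_a) with 0 < b_a < y_a, write Δ_a := y_a − b_a and r_a := b_a/y_a, and fix θ̄ ∈ [0,1) with θ := 1 − θ̄ such that θ̄ < r_a < 1. Suppose the parameters are in case II l, i.e., α > 0 satisfies α·Δ_a ≥ θ²/2 and x_U = y_a − Δ_a/θ − θ/(2α), or in case III L, i.e., r_a ≤ (1 + θ̄)/2, α = θ²/(2(b_a − θ̄·y_a)), and x_U = 0. Then the terminal redemption rate r_L := 1 − α(x_L − x_U), where x_L := y_a − √((y_a − x_U)² − 2Δ_a/α), equals θ̄ exactly. -/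

import Mathlib

/-- Proposition `prop:HLrm`, second half: in case II l
    (`α·Δ_a ≥ θ²/2` with `x_U = x̂_U^l = y_a − Δ_a/θ − θ/(2α)`) and in case III L
    (`r_a ≤ (1 + θ̄)/2`, `α = α̂_L = θ²/(2(b_a − θ̄·y_a))`, `x_U = 0`), the terminal
    redemption rate `r_L := 1 − α(x_L − x_U)` equals `θ̄` exactly, where
    `x_L := y_a − √((y_a − x_U)² − 2Δ_a/α)`. -/
theorem rL_eq_thetabar_in_cases_IIl_IIIL
    (ba ya θbar α xU : ℝ)
    (hba : 0 < ba) (hbya : ba < ya)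
    (hθ0 : 0 ≤ θbar) (hθ1 : θbar < 1)
    (hra : θbar < ba / ya) (hra1 : ba / ya < 1)
    (hcase :
      (0 < α ∧ (1 - θbar) ^ 2 / 2 ≤ α * (ya - ba) ∧
        xU = ya - (ya - ba) / (1 - θbar) - (1 - θbar) / (2 * α)) ∨
      (ba / ya ≤ (1 + θbar) / 2 ∧ α = (1 - θbar) ^ 2 / (2 * (ba - θbar * ya)) ∧ xU = 0)) :
    1 - α * ((ya - Real.sqrt ((ya - xU) ^ 2 - 2 * (ya - ba) / α)) - xU) = θbar := by
  have hya : 0 < ya := hba.trans hbya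
  have hθ : 0 < 1 - θbar := by linarith
  rcases hcase with ⟨hα, hαΔ, hxU⟩ | ⟨hrle, hαeq, hxU⟩
  · set s : ℝ := (ya - ba) / (1 - θbar) - (1 - θbar) / (2 * α) with hs
    have hsnn : 0 ≤ s := by
      rw [hs, sub_nonneg, div_le_div_iff₀ (by positivity) hθ]
      nlinarith
    have harg : (ya - xU) ^ 2 - 2 * (ya - ba) / α = s ^ 2 := by
      rw [hxU, hs]
      field_simp
      ring
    rw [harg, Real.sqrt_sq hsnn, hxU, hs]
    field_simp
    ring
  · have hpos : 0 < ba - θbar * ya := by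
      have := (div_lt_iff₀ hya).mp hra1
      have h2 := (lt_div_iff₀ hya).mp hra
      linarith
    have hα : 0 < α := by rw [hαeq]; positivity
    set s : ℝ := ya - (1 - θbar) / α with hs
    have hsnn : 0 ≤ s := by
      have hval : (1 - θbar) / α = 2 * (ba - θbar * ya) / (1 - θbar) := by
        rw [hαeq]; field_simp
      rw [hs, sub_nonneg, hval, div_le_iff₀ hθ]
      have := (div_le_iff₀ hya).mp hrle
      nlinarith
    have harg : (ya - xU) ^ 2 - 2 * (ya - ba) / α = s ^ 2 := by
      rw [hxU, hs, hαeq]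
      field_simp
      ring
    rw [harg, Real.sqrt_sq hsnn, hxU, hs]
    field_simp
    ring
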